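/- For any integer m ≥ 1, the number of Padua points, i.e., the cardinality of the set {((-1)^{i+j} cos(πj/(m+1)), (-1)^{i+j} cos(πi/m)) : 0 ≤ i + j ≤ m, i, j ∈ ℕ}, equals (m+1)(m+2)/2, which is the dimension of the space of bivariate polynomials of total degree at most m. -/

import Mathlib

open Real

set_option maxHeartbeats 1000000

/-- The Padua points of degree `m` as a subset of `ℝ × ℝ`. -/
def paduaSet (m : ℕ) : Set (ℝ × ℝ) :=
  {p | ∃ i j : ℕ, i + j ≤ m ∧
    p = ((-1 : ℝ) ^ (i + j) * Real.cos (π * j / (m + 1)),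
         (-1 : ℝ) ^ (i + j) * Real.cos (π * i / m))}

lemma angle_mem_Icc (n j : ℕ) (hn : 0 < n) (hj : j ≤ n) :
    π * j / n ∈ Set.Icc 0 π := by
  have h0 : (0:ℝ) < n := by exact_mod_cast hn
  constructor
  · positivity
  · rw [div_le_iff₀ h0]
    have : (j:ℝ) ≤ n := by exact_mod_cast hj
    nlinarith [pi_pos]

lemma padua_inj (m : ℕ) (hm : 1 ≤ m) :
    Set.InjOn (fun p : ℕ × ℕ =>
      (((-1 : ℝ) ^ (p.1 + p.2) * Real.cos (π * p.2 / (m + 1)),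
        (-1 : ℝ) ^ (p.1 + p.2) * Real.cos (π * p.1 / m)) : ℝ × ℝ))
      {p : ℕ × ℕ | p.1 + p.2 ≤ m} := by
  rintro ⟨i, j⟩ hij ⟨i', j'⟩ hij' heq
  simp only [Set.mem_setOf_eq] at hij hij'
  simp only [Prod.mk.injEq] at heq
  obtain ⟨h1, h2⟩ := heq
  have hπ : (0:ℝ) < π := pi_pos
  have hm0 : (0:ℝ) < (m:ℝ) := by exact_mod_cast hm
  have hm1 : (0:ℝ) < (m:ℝ) + 1 := by linarith
  have hjm : j ≤ m + 1 := by omega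
  have hj'm : j' ≤ m + 1 := by omega
  have him : i ≤ m := by omega
  have hi'm : i' ≤ m := by omega
  have hAj : π * j / ((m:ℝ) + 1) ∈ Set.Icc 0 π := by
    have := angle_mem_Icc (m + 1) j (by omega) hjm
    push_cast at this ⊢; convert this using 2
  have hAj' : π * j' / ((m:ℝ) + 1) ∈ Set.Icc 0 π := by
    have := angle_mem_Icc (m + 1) j' (by omega) hj'm
    push_cast at this ⊢; convert this using 2
  have hAi : π * i / (m:ℝ) ∈ Set.Icc 0 π := angle_mem_Icc m i (by omega) him
  have hAi' : π * i' / (m:ℝ) ∈ Set.Icc 0 π := angle_mem_Icc m i' (by omega) hi'm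
  rcases Nat.even_or_odd (i + j) with hpar | hpar <;>
    rcases Nat.even_or_odd (i' + j') with hpar' | hpar'
  -- even, even
  · rw [hpar.neg_one_pow, hpar'.neg_one_pow, one_mul, one_mul] at h1 h2
    have ej : π * j / ((m:ℝ) + 1) = π * j' / ((m:ℝ) + 1) :=
      Real.injOn_cos hAj hAj' h1
    have ei : π * i / (m:ℝ) = π * i' / (m:ℝ) := Real.injOn_cos hAi hAi' h2
    have : (j:ℝ) = j' := by
      field_simp at ej
      linarith
    have hjj : j = j' := by exact_mod_cast this
    have : (i:ℝ) = i' := by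
      field_simp at ei
      linarith
    have hii : i = i' := by exact_mod_cast this
    simp [hii, hjj]
  -- even, odd
  · exfalso
    rw [hpar.neg_one_pow, hpar'.neg_one_pow, one_mul, neg_one_mul] at h1 h2
    have h1' : Real.cos (π * j / ((m:ℝ) + 1)) = Real.cos (π - π * j' / ((m:ℝ) + 1)) := by
      rw [Real.cos_pi_sub]; linarith
    have h2' : Real.cos (π * i / (m:ℝ)) = Real.cos (π - π * i' / (m:ℝ)) := by
      rw [Real.cos_pi_sub]; linarith
    have hBj : π - π * j' / ((m:ℝ) + 1) ∈ Set.Icc 0 π := by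
      obtain ⟨a, b⟩ := hAj'; constructor <;> linarith
    have hBi : π - π * i' / (m:ℝ) ∈ Set.Icc 0 π := by
      obtain ⟨a, b⟩ := hAi'; constructor <;> linarith
    have ej : π * j / ((m:ℝ) + 1) = π - π * j' / ((m:ℝ) + 1) :=
      Real.injOn_cos hAj hBj h1'
    have ei : π * i / (m:ℝ) = π - π * i' / (m:ℝ) := Real.injOn_cos hAi hBi h2'
    have hjr : (j:ℝ) + j' = (m:ℝ) + 1 := by
      field_simp at ej
      nlinarith [ej]
    have hir : (i:ℝ) + i' = (m:ℝ) := by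
      field_simp at ei
      nlinarith [ei]
    have hjn : j + j' = m + 1 := by exact_mod_cast hjr
    have hin : i + i' = m := by exact_mod_cast hir
    omega
  -- odd, even
  · exfalso
    rw [hpar.neg_one_pow, hpar'.neg_one_pow, one_mul, neg_one_mul] at h1 h2
    have h1' : Real.cos (π * j' / ((m:ℝ) + 1)) = Real.cos (π - π * j / ((m:ℝ) + 1)) := by
      rw [Real.cos_pi_sub]; linarith
    have h2' : Real.cos (π * i' / (m:ℝ)) = Real.cos (π - π * i / (m:ℝ)) := by
      rw [Real.cos_pi_sub]; linarith
    have hBj : π - π * j / ((m:ℝ) + 1) ∈ Set.Icc 0 π := by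
      obtain ⟨a, b⟩ := hAj; constructor <;> linarith
    have hBi : π - π * i / (m:ℝ) ∈ Set.Icc 0 π := by
      obtain ⟨a, b⟩ := hAi; constructor <;> linarith
    have ej : π * j' / ((m:ℝ) + 1) = π - π * j / ((m:ℝ) + 1) :=
      Real.injOn_cos hAj' hBj h1'
    have ei : π * i' / (m:ℝ) = π - π * i / (m:ℝ) := Real.injOn_cos hAi' hBi h2'
    have hjr : (j:ℝ) + j' = (m:ℝ) + 1 := by
      field_simp at ej
      nlinarith [ej]
    have hir : (i:ℝ) + i' = (m:ℝ) := by
      field_simp at ei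
      nlinarith [ei]
    have hjn : j + j' = m + 1 := by exact_mod_cast hjr
    have hin : i + i' = m := by exact_mod_cast hir
    omega
  -- odd, odd
  · rw [hpar.neg_one_pow, hpar'.neg_one_pow, neg_one_mul, neg_one_mul,
      neg_inj] at h1 h2
    have ej : π * j / ((m:ℝ) + 1) = π * j' / ((m:ℝ) + 1) :=
      Real.injOn_cos hAj hAj' h1
    have ei : π * i / (m:ℝ) = π * i' / (m:ℝ) := Real.injOn_cos hAi hAi' h2
    have : (j:ℝ) = j' := by
      field_simp at ej
      linarith
    have hjj : j = j' := by exact_mod_cast this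
    have : (i:ℝ) = i' := by
      field_simp at ei
      linarith
    have hii : i = i' := by exact_mod_cast this
    simp [hii, hjj]

theorem stmt0 (m : ℕ) (hm : 1 ≤ m) :
    (paduaSet m).ncard = (m + 1) * (m + 2) / 2 := by
  classical
  set f : ℕ × ℕ → ℝ × ℝ := fun p =>
    (((-1 : ℝ) ^ (p.1 + p.2) * Real.cos (π * p.2 / (m + 1)),
      (-1 : ℝ) ^ (p.1 + p.2) * Real.cos (π * p.1 / m)) : ℝ × ℝ) with hf
  set T : Finset (ℕ × ℕ) := (Finset.range (m + 1)).biUnion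
    (fun k => Finset.HasAntidiagonal.antidiagonal k) with hT
  have hTmem : ∀ p : ℕ × ℕ, p ∈ T ↔ p.1 + p.2 ≤ m := by
    intro p
    simp only [hT, Finset.mem_biUnion, Finset.mem_range, Finset.HasAntidiagonal.mem_antidiagonal]
    constructor
    · rintro ⟨k, hk, rfl⟩; omega
    · intro h; exact ⟨p.1 + p.2, by omega, rfl⟩
  have hset : paduaSet m = f '' (T : Set (ℕ × ℕ)) := by
    ext p
    simp only [paduaSet, Set.mem_setOf_eq, Set.mem_image, Finset.mem_coe, hf]
    constructor
    · rintro ⟨i, j, h, rfl⟩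
      exact ⟨(i, j), (hTmem (i, j)).2 h, rfl⟩
    · rintro ⟨⟨i, j⟩, hmem, rfl⟩
      exact ⟨i, j, (hTmem (i, j)).1 hmem, rfl⟩
  have hinj : Set.InjOn f (T : Set (ℕ × ℕ)) := by
    intro a ha b hb hab
    exact padua_inj m hm ((hTmem a).1 (Finset.mem_coe.1 ha))
      ((hTmem b).1 (Finset.mem_coe.1 hb)) hab
  rw [hset, Set.ncard_image_of_injOn hinj, Set.ncard_coe_finset]
  have hdisj : ∀ k ∈ Finset.range (m + 1), ∀ l ∈ Finset.range (m + 1), k ≠ l →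
      Disjoint (Finset.HasAntidiagonal.antidiagonal k) (Finset.HasAntidiagonal.antidiagonal l) := by
    intro k _ l _ hkl
    rw [Finset.disjoint_left]
    intro p hp hq
    rw [Finset.HasAntidiagonal.mem_antidiagonal] at hp hq
    omega
  rw [hT, Finset.card_biUnion hdisj]
  simp only [Finset.Nat.card_antidiagonal]
  have hg := Finset.sum_range_id_mul_two (m + 1)
  have hsum : ∑ k ∈ Finset.range (m + 1), (k + 1) =
      (∑ k ∈ Finset.range (m + 1), k) + (m + 1) := by
    rw [Finset.sum_add_distrib, Finset.sum_const, Finset.card_range, smul_eq_mul, mul_one]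
  have hkey : (∑ k ∈ Finset.range (m + 1), (k + 1)) * 2 = (m + 1) * (m + 2) := by
    simp only [Nat.add_sub_cancel] at hg
    rw [hsum, add_mul, hg]; ring
  omega
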